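/- T is quasimonotone if and only if M(T^ν, K) ⊆ M(T, K) for every subset K ⊆ X, where M(S, K) denotes the solution set of the Minty variational inequality for S on K. Moreover, if M(T^ν, K) = M(T, K) for every K ⊆ X, then T is pre-maximal quasimonotone. -/

import Mathlib

open NormedSpace

variable {X : Type*} [NormedAddCommGroup X] [NormedSpace ℝ X]

/-- quasimonotone relation: (x,x*) ∼q (y,y*) iff min{⟨y−x,x*⟩, ⟨x−y,y*⟩} ≤ 0 -/
def qrel (p q : X × StrongDual ℝ X) : Prop :=
  min (p.2 (q.1 - p.1)) (q.2 (p.1 - q.1)) ≤ 0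

/-- quasimonotone polar -/
def qpolar (T : Set (X × StrongDual ℝ X)) : Set (X × StrongDual ℝ X) :=
  {p | ∀ q ∈ T, qrel p q}

/-- imagewise conic hull of an operator -/
def coneOp (T : Set (X × StrongDual ℝ X)) : Set (X × StrongDual ℝ X) :=
  {p | ∃ t : ℝ, 0 ≤ t ∧ ∃ v, (p.1, v) ∈ T ∧ p.2 = t • v}

def QuasiMono (T : Set (X × StrongDual ℝ X)) : Prop := ∀ p ∈ T, ∀ q ∈ T, qrel p q

def MaxQuasiMono (T : Set (X × StrongDual ℝ X)) : Prop :=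
  QuasiMono T ∧ ∀ S, QuasiMono S → T ⊆ S → S = T

def Vset (T : Set (X × StrongDual ℝ X)) (x : X) : Set X :=
  {y | ∃ y' : StrongDual ℝ X, (y, y') ∈ T ∧ 0 < y' (x - y)}

/-- the image T^ν(x) of the quasimonotone polar -/
def polarIm (T : Set (X × StrongDual ℝ X)) (x : X) : Set (StrongDual ℝ X) :=
  {x' | (x, x') ∈ qpolar T}

/-- normal cone of C at x (no convexity or membership assumed) -/
def normalCone (C : Set X) (x : X) : Set (StrongDual ℝ X) :=
  {x' | ∀ y ∈ C, x' (y - x) ≤ 0}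

def im (T : Set (X × StrongDual ℝ X)) (x : X) : Set (StrongDual ℝ X) := {v | (x, v) ∈ T}

/-- effective domain: T(u) nonempty and ≠ {0} -/
def edom (T : Set (X × StrongDual ℝ X)) : Set X :=
  {u | (im T u).Nonempty ∧ im T u ≠ {0}}

/-- conic hull of a set in the dual -/
def coneSet (A : Set (StrongDual ℝ X)) : Set (StrongDual ℝ X) :=
  {v | ∃ t : ℝ, 0 ≤ t ∧ ∃ a ∈ A, v = t • a}

def Eset (T : Set (X × StrongDual ℝ X)) : Set X := {x | Vset T x = ∅}

/-- solution set of the Minty variational inequality for S on K -/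
def Minty (S : Set (X × StrongDual ℝ X)) (K : Set X) : Set X :=
  {x ∈ K | ∀ q ∈ S, q.1 ∈ K → q.2 (x - q.1) ≤ 0}

def AEMaxQuasiMono (T : Set (X × StrongDual ℝ X)) : Prop :=
  QuasiMono T ∧ ∀ S, QuasiMono S → (∀ x ∈ edom T, im T x ⊆ coneSet (im S x)) →
    (∀ x ∈ edom T, coneSet (im T x) = coneSet (im S x)) ∧ edom T = edom S

theorem stmt19 [CompleteSpace X] (T : Set (X × StrongDual ℝ X)) :
    (QuasiMono T ↔ ∀ K : Set X, Minty (qpolar T) K ⊆ Minty T K) ∧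
    ((∀ K : Set X, Minty (qpolar T) K = Minty T K) →
      QuasiMono T ∧ QuasiMono (qpolar T)) := by
  have fwd : QuasiMono T → ∀ K : Set X, Minty (qpolar T) K ⊆ Minty T K := by
    intro hT K x hx
    exact ⟨hx.1, fun q hq hqK => hx.2 q (fun r hr => hT q hq r hr) hqK⟩
  have bwd : (∀ K : Set X, Minty (qpolar T) K ⊆ Minty T K) → QuasiMono T := by
    intro h p hp q hq
    by_contra hc
    rw [qrel, not_le, lt_min_iff] at hc
    obtain ⟨h1, h2⟩ := hc
    set K : Set X := {p.1, q.1} with hK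
    have hmem : p.1 ∈ Minty (qpolar T) K := by
      refine ⟨Or.inl rfl, fun r hr hrK => ?_⟩
      rcases hrK with h' | h'
      · rw [h']; simp
      · rw [h']
        have := hr p hp
        rw [qrel, h'] at this
        rcases min_le_iff.1 this with h'' | h''
        · exact h''
        · exact absurd h'' (not_le.2 h1)
    have := (h K hmem).2 q hq (Or.inr rfl)
    exact absurd this (not_le.2 h2)
  refine ⟨⟨fwd, bwd⟩, fun heq => ⟨bwd (fun K => (heq K).le), ?_⟩⟩
  intro p hp q hq
  by_contra hc
  rw [qrel, not_le, lt_min_iff] at hc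
  obtain ⟨h1, h2⟩ := hc
  set K : Set X := {p.1, q.1} with hK
  have hmem : p.1 ∈ Minty T K := by
    refine ⟨Or.inl rfl, fun r hr hrK => ?_⟩
    rcases hrK with h' | h'
    · rw [h']; simp
    · rw [h']
      have := hp r hr
      rw [qrel, h'] at this
      rcases min_le_iff.1 this with h'' | h''
      · exact absurd h'' (not_le.2 h1)
      · exact h''
  rw [← heq K] at hmem
  exact absurd (hmem.2 q hq (Or.inr rfl)) (not_le.2 h2)
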